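/- (Corollary 3.3, inequality (44)) Let N_A, N_B ≥ 2 and let ρ be a separable bipartite density matrix on (Fin N_A × Fin N_B), with marginals ρ_A, ρ_B. Then for every θ ∈ [0, π]: ‖RM( ρ + cos θ · (ρ_A ⊗ₖ ρ_B) )‖_tr ≤ √( (1 + cos θ · tr(ρ_A²)) · (1 + cos θ · tr(ρ_B²)) ). -/

import Mathlib

open Matrix Kronecker Complex ComplexOrder

noncomputable def traceNorm {m n : Type*} [Fintype m] [Fintype n] [DecidableEq n]
    (M : Matrix m n ℂ) : ℝ :=
  (((Matrix.posSemidef_conjTranspose_mul_self M).1.eigenvectorUnitary : Matrix n n ℂ) *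
    diagonal (((↑) : ℝ → ℂ) ∘ Real.sqrt ∘ (Matrix.posSemidef_conjTranspose_mul_self M).1.eigenvalues) *
    (star (Matrix.posSemidef_conjTranspose_mul_self M).1.eigenvectorUnitary : Matrix n n ℂ)).trace.re

def realign {NA NB : ℕ} (ρ : Matrix (Fin NA × Fin NB) (Fin NA × Fin NB) ℂ) :
    Matrix (Fin NA × Fin NA) (Fin NB × Fin NB) ℂ :=
  fun p q => ρ (p.1, q.1) (p.2, q.2)

def IsDensityMatrix {n : Type*} [Fintype n] (ρ : Matrix n n ℂ) : Prop :=
  ρ.PosSemidef ∧ ρ.trace = 1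

noncomputable def hsNorm {m n : Type*} [Fintype m] [Fintype n] (M : Matrix m n ℂ) : ℝ :=
  Real.sqrt (∑ i, ∑ j, ‖M i j‖ ^ 2)

noncomputable def hsInner {m n : Type*} [Fintype m] [Fintype n] (X Y : Matrix m n ℂ) : ℂ :=
  (Xᴴ * Y).trace

noncomputable def marginalA {NA NB : ℕ} (ρ : Matrix (Fin NA × Fin NB) (Fin NA × Fin NB) ℂ) :
    Matrix (Fin NA) (Fin NA) ℂ :=
  fun m n => ∑ μ, ρ (m, μ) (n, μ)

noncomputable def marginalB {NA NB : ℕ} (ρ : Matrix (Fin NA × Fin NB) (Fin NA × Fin NB) ℂ) :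
    Matrix (Fin NB) (Fin NB) ℂ :=
  fun μ ν => ∑ m, ρ (m, μ) (m, ν)

def SeparableState {NA NB : ℕ} (ρ : Matrix (Fin NA × Fin NB) (Fin NA × Fin NB) ℂ) : Prop :=
  ∃ (ι : Type) (s : Finset ι) (p : ι → ℝ)
    (ρA : ι → Matrix (Fin NA) (Fin NA) ℂ) (ρB : ι → Matrix (Fin NB) (Fin NB) ℂ),
    (∀ i ∈ s, 0 < p i) ∧ (∑ i ∈ s, p i = 1) ∧
    (∀ i ∈ s, IsDensityMatrix (ρA i)) ∧ (∀ i ∈ s, IsDensityMatrix (ρB i)) ∧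
    ρ = ∑ i ∈ s, (p i : ℂ) • (ρA i ⊗ₖ ρB i)

noncomputable def l2OpNorm {n : Type*} [Fintype n] [DecidableEq n] (M : Matrix n n ℂ) : ℝ :=
  ‖Matrix.toEuclideanCLM (𝕜 := ℂ) (n := n) M‖

open scoped ComplexConjugate

lemma trace_sqrt_eq {n : Type*} [Fintype n] [DecidableEq n] {A : Matrix n n ℂ}
    (hA : A.PosSemidef) : ((hA.1.eigenvectorUnitary : Matrix n n ℂ) *
      diagonal (((↑) : ℝ → ℂ) ∘ Real.sqrt ∘ hA.1.eigenvalues) *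
      (star hA.1.eigenvectorUnitary : Matrix n n ℂ)).trace
      = ∑ i, (Real.sqrt (hA.1.eigenvalues i) : ℂ) := by
  rw [Matrix.trace_mul_cycle, Unitary.coe_star_mul_self hA.1.eigenvectorUnitary,
    one_mul, Matrix.trace_diagonal]
  rfl

section key
variable {m n : Type*} [Fintype m] [Fintype n] [DecidableEq n] (M : Matrix m n ℂ)

lemma key_orth :
    ∀ i j, (∑ a, conj ((M *ᵥ (fun b => ((Matrix.posSemidef_conjTranspose_mul_self M).1.eigenvectorUnitary : Matrix n n ℂ) b i)) a) *
      (M *ᵥ (fun b => ((Matrix.posSemidef_conjTranspose_mul_self M).1.eigenvectorUnitary : Matrix n n ℂ) b j)) a)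
      = if i = j then ((Matrix.posSemidef_conjTranspose_mul_self M).1.eigenvalues i : ℂ) else 0 := by
  intro i j
  set hH := Matrix.posSemidef_conjTranspose_mul_self M
  set U : Matrix n n ℂ := (hH.1.eigenvectorUnitary : Matrix n n ℂ) with hU
  have h1 : star U * (Mᴴ * M) * U = diagonal ((↑) ∘ hH.1.eigenvalues : n → ℂ) := by
    conv_lhs => rw [hH.1.spectral_theorem, Unitary.conjStarAlgAut_apply]
    rw [← hU]
    have hsU : star U * U = 1 := Unitary.coe_star_mul_self hH.1.eigenvectorUnitary
    simp only [← mul_assoc]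
    rw [hsU, one_mul, mul_assoc, hsU, mul_one]
    rfl
  have h2 := congrFun (congrFun h1 i) j
  rw [Matrix.diagonal_apply] at h2
  simp only [Function.comp_apply] at h2
  rw [← h2]
  simp only [Matrix.mul_apply]
  simp only [Matrix.mulVec, dotProduct, map_sum, _root_.map_mul, Finset.sum_mul,
    Finset.mul_sum, Matrix.conjTranspose_apply, Matrix.star_apply, Matrix.mul_apply]
  rw [Finset.sum_comm]
  refine Finset.sum_congr rfl fun a _ => ?_
  rw [Finset.sum_comm]
  refine Finset.sum_congr rfl fun b _ => ?_
  refine Finset.sum_congr rfl fun c _ => ?_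
  simp [RCLike.star_def]
  ring
end key

lemma bessel {ι n : Type*} [Fintype ι] [DecidableEq ι] [Fintype n] (v : ι → n → ℂ) (x : n → ℂ)
    (hv : ∀ i j, (∑ a, conj (v i a) * v j a)
      = if i = j then (if v i = 0 then (0:ℂ) else 1) else 0) :
    ∑ i, ‖∑ a, conj (v i a) * x a‖ ^ 2 ≤ ∑ a, ‖x a‖ ^ 2 := by
  set e : ι → ℂ := fun i => ∑ a, conj (v i a) * x a with he
  set P : n → ℂ := fun a => ∑ i, e i * v i a with hP
  have hconj_e : ∀ i, conj (e i) = ∑ a, conj (x a) * v i a := by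
    intro i
    simp only [he, map_sum, _root_.map_mul, Complex.conj_conj]
    exact Finset.sum_congr rfl fun a _ => mul_comm _ _
  have he0 : ∀ i, v i = 0 → e i = 0 := by
    intro i h; simp [he, h]
  have hxP : ∑ a, conj (x a) * P a = ∑ i, (Complex.normSq (e i) : ℂ) := by
    simp only [hP, Finset.mul_sum]
    rw [Finset.sum_comm]
    refine Finset.sum_congr rfl fun i _ => ?_
    calc ∑ a, conj (x a) * (e i * v i a) = e i * ∑ a, conj (x a) * v i a := by
          rw [Finset.mul_sum]; exact Finset.sum_congr rfl fun a _ => by ring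
      _ = e i * conj (e i) := by rw [hconj_e]
      _ = _ := Complex.mul_conj _
  have hPx : ∑ a, conj (P a) * x a = ∑ i, (Complex.normSq (e i) : ℂ) := by
    simp only [hP, map_sum, _root_.map_mul, Finset.sum_mul]
    rw [Finset.sum_comm]
    refine Finset.sum_congr rfl fun i _ => ?_
    calc ∑ a, conj (e i) * conj (v i a) * x a = conj (e i) * ∑ a, conj (v i a) * x a := by
          rw [Finset.mul_sum]; exact Finset.sum_congr rfl fun a _ => by ring
      _ = conj (e i) * e i := rfl
      _ = _ := by rw [mul_comm]; exact Complex.mul_conj _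
  have hPa : ∀ a, conj (P a) * P a
      = ∑ i, ∑ j, (conj (e i) * e j) * (conj (v i a) * v j a) := by
    intro a
    simp only [hP, map_sum, _root_.map_mul, Finset.sum_mul, Finset.mul_sum]
    rw [Finset.sum_comm]
    exact Finset.sum_congr rfl fun i _ => Finset.sum_congr rfl fun j _ => by ring
  have hPP : ∑ a, conj (P a) * P a = ∑ i, (Complex.normSq (e i) : ℂ) := by
    rw [Finset.sum_congr rfl fun a _ => hPa a, Finset.sum_comm]
    refine Finset.sum_congr rfl fun i _ => ?_
    rw [Finset.sum_comm]
    have h1 : ∀ j, ∑ a, (conj (e i) * e j) * (conj (v i a) * v j a)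
        = (conj (e i) * e j) * ∑ a, (conj (v i a) * v j a) :=
      fun j => (Finset.mul_sum _ _ _).symm
    rw [Finset.sum_congr rfl fun j _ => h1 j]
    have h2 : ∀ j, (conj (e i) * e j) * (∑ a, conj (v i a) * v j a)
        = if j = i then conj (e i) * e i * (if v i = 0 then (0:ℂ) else 1) else 0 := by
      intro j
      rw [hv i j]
      by_cases h : i = j
      · subst h; simp
      · simp [h, Ne.symm h]
    rw [Finset.sum_congr rfl fun j _ => h2 j, Finset.sum_ite_eq']
    simp only [Finset.mem_univ, if_true]
    by_cases h : v i = 0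
    · simp [h, he0 i h]
    · simp only [h, if_false, mul_one]
      rw [mul_comm]; exact Complex.mul_conj _
  have main : ∑ a, (Complex.normSq (x a - P a) : ℂ)
      = ∑ a, (Complex.normSq (x a) : ℂ) - ∑ i, (Complex.normSq (e i) : ℂ) := by
    have expand : ∀ a, (Complex.normSq (x a - P a) : ℂ)
        = conj (x a) * x a - conj (x a) * P a - conj (P a) * x a + conj (P a) * P a := by
      intro a
      rw [← Complex.mul_conj (x a - P a), map_sub]
      ring
    rw [Finset.sum_congr rfl fun a _ => expand a]
    rw [Finset.sum_add_distrib, Finset.sum_sub_distrib, Finset.sum_sub_distrib,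
      hxP, hPx, hPP]
    have h3 : ∀ a, conj (x a) * x a = (Complex.normSq (x a) : ℂ) := by
      intro a; rw [mul_comm]; exact Complex.mul_conj _
    rw [Finset.sum_congr rfl fun a _ => h3 a]
    ring
  have main_re := congrArg Complex.re main
  simp only [Complex.re_sum, Complex.sub_re, Complex.ofReal_re] at main_re
  have h1 : (0:ℝ) ≤ ∑ a, Complex.normSq (x a - P a) :=
    Finset.sum_nonneg fun a _ => Complex.normSq_nonneg _
  have h2 : ∑ i, Complex.normSq (e i) ≤ ∑ a, Complex.normSq (x a) := by
    rw [main_re] at h1; linarith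
  calc ∑ i, ‖e i‖ ^ 2 = ∑ i, Complex.normSq (e i) := by
        refine Finset.sum_congr rfl fun i _ => ?_
        exact Complex.sq_norm _
    _ ≤ ∑ a, Complex.normSq (x a) := h2
    _ = ∑ a, ‖x a‖ ^ 2 := by
        refine Finset.sum_congr rfl fun a _ => ?_
        rw [Complex.sq_norm]

lemma parseval {n : Type*} [Fintype n] [DecidableEq n] (U : Matrix n n ℂ)
    (hU : U * Uᴴ = 1) (y : n → ℂ) :
    ∑ i, ‖∑ b, y b * U b i‖ ^ 2 = ∑ b, ‖y b‖ ^ 2 := by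
  have hC : ∑ i, (Complex.normSq (∑ b, y b * U b i) : ℂ) = ∑ b, (Complex.normSq (y b) : ℂ) := by
    have h1 : ∀ i, (Complex.normSq (∑ b, y b * U b i) : ℂ)
        = ∑ a, ∑ b, (conj (y a) * y b) * (U b i * conj (U a i)) := by
      intro i
      rw [← Complex.mul_conj, map_sum]
      simp only [_root_.map_mul, Finset.sum_mul, Finset.mul_sum]
      exact Finset.sum_congr rfl fun a _ => Finset.sum_congr rfl fun b _ => by ring
    rw [Finset.sum_congr rfl fun i _ => h1 i, Finset.sum_comm]
    have step1 : ∀ a, (∑ i, ∑ b, (conj (y a) * y b) * (U b i * conj (U a i)))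
        = ∑ b, (conj (y a) * y b) * ((U * Uᴴ) b a) := by
      intro a
      rw [Finset.sum_comm]
      refine Finset.sum_congr rfl fun b _ => ?_
      rw [Matrix.mul_apply, Finset.mul_sum]
      exact Finset.sum_congr rfl fun i _ => by rw [Matrix.conjTranspose_apply, RCLike.star_def]
    rw [Finset.sum_congr rfl fun a _ => step1 a]
    refine Finset.sum_congr rfl fun a _ => ?_
    rw [hU]
    have h3 : ∀ b, (conj (y a) * y b) * ((1 : Matrix n n ℂ) b a)
        = if b = a then conj (y a) * y a * 1 else 0 := by
      intro b
      rw [Matrix.one_apply]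
      by_cases h : b = a
      · subst h; simp
      · simp [h]
    rw [Finset.sum_congr rfl fun b _ => h3 b, Finset.sum_ite_eq']
    simp only [Finset.mem_univ, if_true, mul_one]
    rw [mul_comm]; exact Complex.mul_conj _
  have := congrArg Complex.re hC
  simp only [Complex.re_sum, Complex.ofReal_re] at this
  calc ∑ i, ‖∑ b, y b * U b i‖ ^ 2 = ∑ i, Complex.normSq (∑ b, y b * U b i) := by
        refine Finset.sum_congr rfl fun i _ => ?_
        rw [Complex.sq_norm]
    _ = ∑ b, Complex.normSq (y b) := this
    _ = ∑ b, ‖y b‖ ^ 2 := by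
        refine Finset.sum_congr rfl fun b _ => ?_
        rw [Complex.sq_norm]

lemma cs_c {ι : Type*} (t : Finset ι) (f g : ι → ℂ) :
    ‖∑ i ∈ t, f i * g i‖
      ≤ Real.sqrt (∑ i ∈ t, ‖f i‖ ^ 2) * Real.sqrt (∑ i ∈ t, ‖g i‖ ^ 2) := by
  refine (norm_sum_le _ _).trans ?_
  simp_rw [norm_mul]
  exact Real.sum_mul_le_sqrt_mul_sqrt t (fun i => ‖f i‖) (fun i => ‖g i‖)

lemma traceNorm_le_of_eq_sum {m n ι : Type*} [Fintype m] [Fintype n] [DecidableEq n]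
    (t : Finset ι) (x : ι → m → ℂ) (y : ι → n → ℂ) (M : Matrix m n ℂ)
    (hM : ∀ a b, M a b = ∑ k ∈ t, x k a * y k b) :
    traceNorm M ≤ ∑ k ∈ t, Real.sqrt (∑ a, ‖x k a‖ ^ 2) * Real.sqrt (∑ b, ‖y k b‖ ^ 2) := by
  classical
  have hH := Matrix.posSemidef_conjTranspose_mul_self M
  set U : Matrix n n ℂ := ((Matrix.posSemidef_conjTranspose_mul_self M).1.eigenvectorUnitary : Matrix n n ℂ) with hUdef
  set g : n → ℝ := (Matrix.posSemidef_conjTranspose_mul_self M).1.eigenvalues with hgdef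
  have hg : ∀ i, 0 ≤ g i := (Matrix.posSemidef_conjTranspose_mul_self M).eigenvalues_nonneg
  set w : n → m → ℂ := fun i => M *ᵥ (fun b => U b i) with hw
  have key : ∀ i j, (∑ a, conj (w i a) * w j a) = if i = j then (g i : ℂ) else 0 :=
    fun i j => key_orth M i j
  have hw0 : ∀ i, g i = 0 → w i = 0 := by
    intro i h
    have h1 := key i i
    rw [if_pos rfl, h, Complex.ofReal_zero] at h1
    have h2 : ∀ a, conj (w i a) * w i a = (Complex.normSq (w i a) : ℂ) := by
      intro a; rw [mul_comm]; exact Complex.mul_conj _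
    rw [Finset.sum_congr rfl fun a _ => h2 a] at h1
    have h3 := congrArg Complex.re h1
    simp only [Complex.re_sum, Complex.ofReal_re, Complex.zero_re] at h3
    have h4 := (Finset.sum_eq_zero_iff_of_nonneg
      (fun a _ => Complex.normSq_nonneg (w i a))).mp h3
    funext a
    exact Complex.normSq_eq_zero.mp (h4 a (Finset.mem_univ a))
  set v : n → m → ℂ := fun i a => ((Real.sqrt (g i))⁻¹ : ℂ) * w i a with hv
  have hv0 : ∀ i, g i = 0 → v i = 0 := by
    intro i h; funext a; simp [hv, congrFun (hw0 i h) a]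
  have hvw : ∀ i j, ∑ a, conj (v i a) * w j a
      = ((Real.sqrt (g i))⁻¹ : ℂ) * ∑ a, conj (w i a) * w j a := by
    intro i j
    rw [Finset.mul_sum]
    refine Finset.sum_congr rfl fun a _ => ?_
    simp only [hv, _root_.map_mul, map_inv₀, Complex.conj_ofReal]
    ring
  have hvv : ∀ i j, (∑ a, conj (v i a) * v j a)
      = if i = j then (if v i = 0 then (0:ℂ) else 1) else 0 := by
    intro i j
    have h1 : ∑ a, conj (v i a) * v j a
        = ((Real.sqrt (g j))⁻¹ : ℂ) * ∑ a, conj (v i a) * w j a := by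
      rw [Finset.mul_sum]
      refine Finset.sum_congr rfl fun a _ => ?_
      simp only [hv]; ring
    rw [h1, hvw, key i j]
    by_cases hij : i = j
    · subst hij
      rw [if_pos rfl, if_pos rfl]
      by_cases hgi : g i = 0
      · simp [hgi, hv0 i hgi]
      · have hvi : v i ≠ 0 := by
          intro hcon
          apply hgi
          have : w i = 0 := by
            funext a
            have := congrFun hcon a
            simp only [hv] at this
            have hs : ((Real.sqrt (g i))⁻¹ : ℂ) ≠ 0 := by
              simp only [ne_eq, Complex.ofReal_eq_zero, inv_eq_zero]
              exact Real.sqrt_ne_zero'.mpr (lt_of_le_of_ne (hg i) (Ne.symm hgi))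
            exact (mul_eq_zero.mp this).resolve_left hs
          have h1 := key i i
          rw [if_pos rfl, this] at h1
          simp only [Pi.zero_apply, map_zero, zero_mul, Finset.sum_const_zero] at h1
          exact_mod_cast h1.symm
        rw [if_neg hvi]
        have hr : (Real.sqrt (g i))⁻¹ * (Real.sqrt (g i))⁻¹ * g i = 1 := by
          rw [← mul_inv, Real.mul_self_sqrt (hg i)]
          exact inv_mul_cancel₀ hgi
        rw [← mul_assoc]
        exact_mod_cast congrArg (Complex.ofReal) hr
    · rw [if_neg hij, if_neg hij, mul_zero, mul_zero]
  have sqrt_eq : ∀ i, Real.sqrt (g i) = (∑ a, conj (v i a) * w i a).re := by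
    intro i
    rw [hvw i i, key i i, if_pos rfl]
    by_cases hgi : g i = 0
    · simp [hgi]
    · rw [← Complex.ofReal_inv, ← Complex.ofReal_mul]
      rw [Complex.ofReal_re]
      rw [eq_comm, inv_mul_eq_iff_eq_mul₀ (by
        exact Real.sqrt_ne_zero'.mpr (lt_of_le_of_ne (hg i) (Ne.symm hgi)))]
      exact (Real.mul_self_sqrt (hg i)).symm
  have tval : traceNorm M = ∑ i, Real.sqrt (g i) := by
    have h1 : traceNorm M
        = (((Matrix.posSemidef_conjTranspose_mul_self M).1.eigenvectorUnitary : Matrix n n ℂ) *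
    diagonal (((↑) : ℝ → ℂ) ∘ Real.sqrt ∘ (Matrix.posSemidef_conjTranspose_mul_self M).1.eigenvalues) *
    (star (Matrix.posSemidef_conjTranspose_mul_self M).1.eigenvectorUnitary : Matrix n n ℂ)).trace.re := rfl
    rw [h1, trace_sqrt_eq (Matrix.posSemidef_conjTranspose_mul_self M)]
    rw [← Complex.ofReal_sum]
    exact Complex.ofReal_re _
  set c : ι → n → ℂ := fun k i => ∑ b, y k b * U b i with hc
  have hMv : ∀ i a, w i a = ∑ k ∈ t, x k a * c k i := by
    intro i a
    have h1 : w i a = ∑ b, M a b * U b i := rfl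
    rw [h1]
    rw [Finset.sum_congr rfl fun b (_ : b ∈ Finset.univ) => by rw [hM a b]]
    rw [Finset.sum_congr rfl fun b (_ : b ∈ Finset.univ) => Finset.sum_mul t _ (U b i)]
    rw [Finset.sum_comm]
    refine Finset.sum_congr rfl fun k _ => ?_
    rw [hc, Finset.mul_sum]
    exact Finset.sum_congr rfl fun b _ => by ring
  have swap_eq : ∑ i, ∑ a, conj (v i a) * w i a
      = ∑ k ∈ t, ∑ i, c k i * (∑ a, conj (v i a) * x k a) := by
    have h1 : ∀ i, ∑ a, conj (v i a) * w i a
        = ∑ k ∈ t, c k i * (∑ a, conj (v i a) * x k a) := by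
      intro i
      have h2 : ∀ a, conj (v i a) * w i a = ∑ k ∈ t, c k i * (conj (v i a) * x k a) := by
        intro a
        rw [hMv i a, Finset.mul_sum]
        exact Finset.sum_congr rfl fun k _ => by ring
      rw [Finset.sum_congr rfl fun a (_ : a ∈ Finset.univ) => h2 a, Finset.sum_comm]
      exact Finset.sum_congr rfl fun k _ => (Finset.mul_sum _ _ _).symm
    rw [Finset.sum_congr rfl fun i (_ : i ∈ Finset.univ) => h1 i]
    exact Finset.sum_comm
  have hUU : U * Uᴴ = 1 := by
    have := Unitary.coe_mul_star_self
      (Matrix.posSemidef_conjTranspose_mul_self M).1.eigenvectorUnitary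
    exact this
  calc traceNorm M = ∑ i, Real.sqrt (g i) := tval
    _ = ∑ i, (∑ a, conj (v i a) * w i a).re := Finset.sum_congr rfl fun i _ => sqrt_eq i
    _ = (∑ i, ∑ a, conj (v i a) * w i a).re := by rw [Complex.re_sum]
    _ = (∑ k ∈ t, ∑ i, c k i * (∑ a, conj (v i a) * x k a)).re := by rw [swap_eq]
    _ ≤ ‖∑ k ∈ t, ∑ i, c k i * (∑ a, conj (v i a) * x k a)‖ := Complex.re_le_norm _
    _ ≤ ∑ k ∈ t, ‖∑ i, c k i * (∑ a, conj (v i a) * x k a)‖ := norm_sum_le _ _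
    _ ≤ ∑ k ∈ t, Real.sqrt (∑ i, ‖c k i‖ ^ 2)
          * Real.sqrt (∑ i, ‖∑ a, conj (v i a) * x k a‖ ^ 2) := by
        exact Finset.sum_le_sum fun k _ => cs_c Finset.univ _ _
    _ ≤ ∑ k ∈ t, Real.sqrt (∑ a, ‖x k a‖ ^ 2) * Real.sqrt (∑ b, ‖y k b‖ ^ 2) := by
        refine Finset.sum_le_sum fun k _ => ?_
        rw [mul_comm]
        have hpar : ∑ i, ‖c k i‖ ^ 2 = ∑ b, ‖y k b‖ ^ 2 := parseval U hUU (y k)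
        have hbes : ∑ i, ‖∑ a, conj (v i a) * x k a‖ ^ 2 ≤ ∑ a, ‖x k a‖ ^ 2 :=
          bessel v (x k) hvv
        have h1 : Real.sqrt (∑ i, ‖c k i‖ ^ 2) = Real.sqrt (∑ b, ‖y k b‖ ^ 2) := by
          rw [hpar]
        rw [h1]
        exact mul_le_mul_of_nonneg_right (Real.sqrt_le_sqrt hbes) (Real.sqrt_nonneg _)

lemma trace_eq_sum_eigenvalues {n : Type*} [Fintype n] [DecidableEq n] {A : Matrix n n ℂ}
    (hA : A.IsHermitian) : A.trace = ∑ i, (hA.eigenvalues i : ℂ) := by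
  conv_lhs => rw [hA.spectral_theorem, Unitary.conjStarAlgAut_apply]
  rw [Matrix.trace_mul_cycle, Unitary.coe_star_mul_self hA.eigenvectorUnitary,
    one_mul, Matrix.trace_diagonal]
  rfl

lemma trace_sq_eq_sum_sq {n : Type*} [Fintype n] [DecidableEq n] {A : Matrix n n ℂ}
    (hA : A.IsHermitian) : (A * A).trace = ∑ i, ((hA.eigenvalues i : ℂ)) ^ 2 := by
  have hs := hA.spectral_theorem
  set U : Matrix n n ℂ := (hA.eigenvectorUnitary : Matrix n n ℂ) with hU
  set D : Matrix n n ℂ := Matrix.diagonal (RCLike.ofReal ∘ hA.eigenvalues) with hD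
  have hsU : star U * U = 1 := Unitary.coe_star_mul_self hA.eigenvectorUnitary
  have h1 : A * A = U * (D * D) * star U := by
    rw [hs, Unitary.conjStarAlgAut_apply]
    simp only [← mul_assoc, ← hU, ← hD]
    rw [mul_assoc (U * D) (star U) U, hsU, mul_one]
  rw [h1, Matrix.trace_mul_cycle, ← mul_assoc, hsU, one_mul]
  rw [hD, Matrix.diagonal_mul_diagonal, Matrix.trace_diagonal]
  exact Finset.sum_congr rfl fun i _ => by simp [sq]

lemma purity_le_one {n : Type*} [Fintype n] [DecidableEq n] {A : Matrix n n ℂ}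
    (hA : IsDensityMatrix A) : ((A * A).trace).re ≤ 1 := by
  have her := hA.1.1
  have h1 := trace_sq_eq_sum_sq her
  have h2 := trace_eq_sum_eigenvalues her
  rw [hA.2] at h2
  have heig : ∀ i, 0 ≤ her.eigenvalues i := hA.1.eigenvalues_nonneg
  have h3 : ∑ i, her.eigenvalues i = 1 := by
    have := congrArg Complex.re h2
    simp only [Complex.re_sum, Complex.ofReal_re, Complex.one_re] at this
    exact this.symm
  have h4 : ((A * A).trace).re = ∑ i, (her.eigenvalues i) ^ 2 := by
    rw [h1]
    simp [Complex.re_sum, ← Complex.ofReal_pow]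
  rw [h4]
  calc ∑ i, (her.eigenvalues i) ^ 2 ≤ (∑ i, her.eigenvalues i) ^ 2 :=
        Finset.sum_sq_le_sq_sum_of_nonneg fun i _ => heig i
    _ = 1 := by rw [h3]; norm_num

lemma hs_eq_trace_sq {n : Type*} [Fintype n] (A : Matrix n n ℂ) (hA : A.IsHermitian) :
    ∑ a, ∑ b, ‖A a b‖ ^ 2 = ((A * A).trace).re := by
  have h1 : (A * A).trace = ∑ a, ∑ b, (Complex.normSq (A a b) : ℂ) := by
    rw [Matrix.trace]
    refine Finset.sum_congr rfl fun a _ => ?_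
    rw [Matrix.diag_apply, Matrix.mul_apply]
    refine Finset.sum_congr rfl fun b _ => ?_
    have : A b a = conj (A a b) := by
      conv_lhs => rw [← hA]
      rfl
    rw [this, Complex.mul_conj]
  rw [h1]
  simp only [Complex.re_sum, Complex.ofReal_re]
  exact Finset.sum_congr rfl fun a _ => Finset.sum_congr rfl fun b _ => by
    rw [Complex.sq_norm]

lemma norm_sq_combo (cc ss : ℝ) (a b : ℂ) :
    ‖(cc:ℂ) * a + (ss:ℂ) * b‖ ^ 2
      = cc^2 * ‖a‖^2 + ss^2 * ‖b‖^2 + 2*cc*ss*((a * conj b).re) := by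
  rw [Complex.sq_norm, Complex.normSq_add]
  simp only [Complex.normSq_mul, Complex.normSq_ofReal, _root_.map_mul, Complex.conj_ofReal]
  rw [show (cc:ℂ) * a * ((ss:ℂ) * conj b) = (cc*ss : ℝ) * (a * conj b) by push_cast; ring]
  rw [Complex.re_ofReal_mul]
  rw [Complex.sq_norm, Complex.sq_norm]
  rw [Complex.normSq_apply, Complex.normSq_apply]
  ring

lemma claim_sum {N : ℕ} {ι : Type} [DecidableEq ι] (s : Finset ι) (p : ι → ℝ)
    (A : ι → Matrix (Fin N) (Fin N) ℂ) (hp : ∀ i ∈ s, 0 < p i) (hp1 : ∑ i ∈ s, p i = 1)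
    (hd : ∀ i ∈ s, IsDensityMatrix (A i)) (cc ss cθ : ℝ)
    (hpyth : cc^2 + ss^2 = 1) (h2cs : 2*cc*ss = cθ) :
    ∑ k ∈ s ×ˢ s, ∑ q : Fin N × Fin N,
        ‖(Real.sqrt (p k.1 * p k.2) : ℂ)
          * ((cc:ℂ) * A k.1 q.1 q.2 + (ss:ℂ) * A k.2 q.1 q.2)‖ ^ 2
      ≤ 1 + cθ * (((∑ i ∈ s, (p i : ℂ) • A i) * (∑ i ∈ s, (p i : ℂ) • A i)).trace).re := by
  classical
  set R : Matrix (Fin N) (Fin N) ℂ := ∑ i ∈ s, (p i : ℂ) • A i with hR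
  set h : ι → ℝ := fun i => ∑ q : Fin N × Fin N, ‖A i q.1 q.2‖ ^ 2 with hh
  set r : ι → ι → ℝ := fun i j =>
    ∑ q : Fin N × Fin N, ((A i q.1 q.2) * conj (A j q.1 q.2)).re with hr
  -- step 1 : inner sums
  have step1 : ∀ k ∈ s ×ˢ s, ∑ q : Fin N × Fin N,
      ‖(Real.sqrt (p k.1 * p k.2) : ℂ)
        * ((cc:ℂ) * A k.1 q.1 q.2 + (ss:ℂ) * A k.2 q.1 q.2)‖ ^ 2
      = p k.1 * p k.2 * (cc^2 * h k.1 + ss^2 * h k.2 + 2*cc*ss * r k.1 k.2) := by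
    rintro ⟨i, j⟩ hk
    rw [Finset.mem_product] at hk
    have hw : (0:ℝ) ≤ p i * p j := le_of_lt (mul_pos (hp i hk.1) (hp j hk.2))
    have hq : ∀ q : Fin N × Fin N,
        ‖(Real.sqrt (p i * p j) : ℂ) * ((cc:ℂ) * A i q.1 q.2 + (ss:ℂ) * A j q.1 q.2)‖ ^ 2
        = p i * p j * (cc^2 * ‖A i q.1 q.2‖^2 + ss^2 * ‖A j q.1 q.2‖^2
            + 2*cc*ss*((A i q.1 q.2 * conj (A j q.1 q.2)).re)) := by
      intro q
      rw [norm_mul, mul_pow, Complex.norm_real, Real.norm_eq_abs, _root_.sq_abs,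
        Real.sq_sqrt hw, norm_sq_combo]
    rw [Finset.sum_congr rfl fun q _ => hq q, ← Finset.mul_sum]
    congr 1
    rw [hh, hr]
    simp only []
    rw [Finset.sum_add_distrib, Finset.sum_add_distrib, ← Finset.mul_sum, ← Finset.mul_sum,
      ← Finset.mul_sum]
  rw [Finset.sum_congr rfl step1]
  -- expand over product
  rw [Finset.sum_product]
  have expand : ∀ i ∈ s, ∑ j ∈ s, p i * p j
        * (cc^2 * h i + ss^2 * h j + 2*cc*ss * r i j)
      = p i * cc^2 * h i + p i * ss^2 * (∑ j ∈ s, p j * h j)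
        + 2*cc*ss * ∑ j ∈ s, (p i * p j) * r i j := by
    intro i _
    rw [Finset.sum_congr rfl (fun j _ => by ring :
      ∀ j ∈ s, p i * p j * (cc^2 * h i + ss^2 * h j + 2*cc*ss * r i j)
        = (p i * cc^2 * h i) * p j + p i * ss^2 * (p j * h j)
          + 2*cc*ss * ((p i * p j) * r i j))]
    rw [Finset.sum_add_distrib, Finset.sum_add_distrib, ← Finset.mul_sum, ← Finset.mul_sum,
      ← Finset.mul_sum, hp1, mul_one]
  rw [Finset.sum_congr rfl expand, Finset.sum_add_distrib, Finset.sum_add_distrib]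
  have t1 : ∑ i ∈ s, p i * cc^2 * h i = cc^2 * ∑ i ∈ s, p i * h i := by
    rw [Finset.mul_sum]; exact Finset.sum_congr rfl fun i _ => by ring
  have t2 : ∑ i ∈ s, p i * ss^2 * (∑ j ∈ s, p j * h j)
      = ss^2 * ∑ i ∈ s, p i * h i := by
    rw [Finset.sum_congr rfl (fun i _ => by ring :
      ∀ i ∈ s, p i * ss^2 * (∑ j ∈ s, p j * h j) = p i * (ss^2 * ∑ j ∈ s, p j * h j))]
    rw [← Finset.sum_mul, hp1, one_mul]
  have t3 : ∑ i ∈ s, 2*cc*ss * ∑ j ∈ s, (p i * p j) * r i j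
      = 2*cc*ss * ∑ i ∈ s, ∑ j ∈ s, (p i * p j) * r i j := by
    rw [Finset.mul_sum]
  have hz : ∀ q : Fin N × Fin N, R q.1 q.2 = ∑ i ∈ s, (p i:ℂ) * A i q.1 q.2 := by
    intro q
    rw [hR]
    rw [Matrix.sum_apply]
    exact Finset.sum_congr rfl fun i _ => by simp [Matrix.smul_apply, smul_eq_mul]
  have hRe : ∀ i j, (p i * p j) * r i j
      = ∑ q : Fin N × Fin N, (((p i:ℂ) * A i q.1 q.2) * conj ((p j:ℂ) * A j q.1 q.2)).re := by
    intro i j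
    rw [hr]
    simp only []
    rw [Finset.mul_sum]
    refine Finset.sum_congr rfl fun q _ => ?_
    rw [_root_.map_mul, Complex.conj_ofReal,
      show ((p i:ℂ) * A i q.1 q.2) * ((p j:ℂ) * conj (A j q.1 q.2))
        = ((p i * p j : ℝ) : ℂ) * (A i q.1 q.2 * conj (A j q.1 q.2)) by push_cast; ring,
      Complex.re_ofReal_mul]
  have cross : ∑ i ∈ s, ∑ j ∈ s, (p i * p j) * r i j
      = ∑ q : Fin N × Fin N, ‖R q.1 q.2‖ ^ 2 := by
    rw [Finset.sum_congr rfl fun i _ => Finset.sum_congr rfl fun j _ => hRe i j]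
    rw [Finset.sum_congr rfl fun i (_ : i ∈ s) => Finset.sum_comm]
    rw [Finset.sum_comm]
    refine Finset.sum_congr rfl fun q _ => ?_
    have : ∑ i ∈ s, ∑ j ∈ s, (((p i:ℂ) * A i q.1 q.2) * conj ((p j:ℂ) * A j q.1 q.2)).re
        = ((∑ i ∈ s, (p i:ℂ) * A i q.1 q.2) * conj (∑ j ∈ s, (p j:ℂ) * A j q.1 q.2)).re := by
      rw [map_sum, Finset.sum_mul_sum, Complex.re_sum]
      exact Finset.sum_congr rfl fun i _ => (Complex.re_sum _ _).symm
    rw [this, ← hz q, Complex.mul_conj]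
    rw [Complex.ofReal_re, Complex.sq_norm]
  have hRherm : R.IsHermitian := by
    rw [hR, Matrix.IsHermitian, Matrix.conjTranspose_sum]
    refine Finset.sum_congr rfl fun i hi => ?_
    rw [Matrix.conjTranspose_smul, (hd i hi).1.1]
    congr 1
    simp [Complex.conj_ofReal]
  have hHS : ∑ q : Fin N × Fin N, ‖R q.1 q.2‖ ^ 2 = ((R * R).trace).re := by
    rw [← hs_eq_trace_sq R hRherm, Fintype.sum_prod_type]
  have hS1 : ∑ i ∈ s, p i * h i ≤ 1 := by
    have hhle : ∀ i ∈ s, h i ≤ 1 := by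
      intro i hi
      have e1 : h i = ((A i * A i).trace).re := by
        rw [hh]
        simp only []
        rw [← hs_eq_trace_sq (A i) (hd i hi).1.1, Fintype.sum_prod_type]
      rw [e1]
      exact purity_le_one (hd i hi)
    calc ∑ i ∈ s, p i * h i ≤ ∑ i ∈ s, p i * 1 :=
          Finset.sum_le_sum fun i hi =>
            mul_le_mul_of_nonneg_left (hhle i hi) (le_of_lt (hp i hi))
      _ = 1 := by simp only [mul_one]; exact hp1
  rw [t1, t2, t3, cross, hHS, h2cs]
  have hcomb : cc^2 * (∑ i ∈ s, p i * h i) + ss^2 * (∑ i ∈ s, p i * h i)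
      = ∑ i ∈ s, p i * h i := by
    rw [← add_mul, hpyth, one_mul]
  linarith [hcomb, hS1]

lemma scalar_decomp {ι : Type} [DecidableEq ι] (s : Finset ι) (p : ι → ℝ)
    (hp : ∀ i ∈ s, 0 < p i) (hp1 : ∑ i ∈ s, p i = 1) (cc ss cθ : ℝ)
    (hpyth : cc^2 + ss^2 = 1) (h2cs : 2*cc*ss = cθ) (a b : ι → ℂ) :
    ∑ k ∈ s ×ˢ s, ((Real.sqrt (p k.1 * p k.2) : ℂ) * ((cc:ℂ) * a k.1 + (ss:ℂ) * a k.2))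
        * ((Real.sqrt (p k.1 * p k.2) : ℂ) * ((cc:ℂ) * b k.1 + (ss:ℂ) * b k.2))
      = (∑ i ∈ s, (p i : ℂ) * (a i * b i))
        + (cθ:ℂ) * ((∑ i ∈ s, (p i:ℂ) * a i) * (∑ j ∈ s, (p j:ℂ) * b j)) := by
  classical
  set S : ℂ := ∑ i ∈ s, (p i : ℂ) * (a i * b i) with hS
  set PA : ℂ := ∑ i ∈ s, (p i:ℂ) * a i with hPA
  set PB : ℂ := ∑ j ∈ s, (p j:ℂ) * b j with hPB
  have hps : ∑ j ∈ s, (p j : ℂ) = 1 := by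
    rw [← Complex.ofReal_sum, hp1, Complex.ofReal_one]
  rw [Finset.sum_product]
  have inner_eq : ∀ i ∈ s, ∑ j ∈ s,
      ((Real.sqrt (p i * p j) : ℂ) * ((cc:ℂ) * a i + (ss:ℂ) * a j))
        * ((Real.sqrt (p i * p j) : ℂ) * ((cc:ℂ) * b i + (ss:ℂ) * b j))
      = ((cc:ℂ)^2 * ((p i:ℂ) * (a i * b i))) + ((cc:ℂ)*(ss:ℂ)) * (((p i:ℂ) * a i) * PB)
        + ((cc:ℂ)*(ss:ℂ)) * (((p i:ℂ) * b i) * PA) + (ss:ℂ)^2 * ((p i:ℂ) * S) := by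
    intro i hi
    have term_eq : ∀ j ∈ s,
        ((Real.sqrt (p i * p j) : ℂ) * ((cc:ℂ) * a i + (ss:ℂ) * a j))
          * ((Real.sqrt (p i * p j) : ℂ) * ((cc:ℂ) * b i + (ss:ℂ) * b j))
        = ((cc:ℂ)^2 * ((p i:ℂ) * (a i * b i))) * (p j : ℂ)
          + ((cc:ℂ)*(ss:ℂ) * ((p i:ℂ) * a i)) * ((p j:ℂ) * b j)
          + ((cc:ℂ)*(ss:ℂ) * ((p i:ℂ) * b i)) * ((p j:ℂ) * a j)
          + ((ss:ℂ)^2 * (p i:ℂ)) * ((p j:ℂ) * (a j * b j)) := by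
      intro j hj
      have hw : (0:ℝ) ≤ p i * p j := le_of_lt (mul_pos (hp i hi) (hp j hj))
      have hsq : (Real.sqrt (p i * p j) : ℂ) * (Real.sqrt (p i * p j) : ℂ)
          = (p i : ℂ) * (p j : ℂ) := by
        rw [← Complex.ofReal_mul, Real.mul_self_sqrt hw, Complex.ofReal_mul]
      calc ((Real.sqrt (p i * p j) : ℂ) * ((cc:ℂ) * a i + (ss:ℂ) * a j))
            * ((Real.sqrt (p i * p j) : ℂ) * ((cc:ℂ) * b i + (ss:ℂ) * b j))
          = ((Real.sqrt (p i * p j) : ℂ) * (Real.sqrt (p i * p j) : ℂ))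
            * (((cc:ℂ) * a i + (ss:ℂ) * a j) * ((cc:ℂ) * b i + (ss:ℂ) * b j)) := by ring
        _ = _ := by rw [hsq]; ring
    rw [Finset.sum_congr rfl term_eq]
    rw [Finset.sum_add_distrib, Finset.sum_add_distrib, Finset.sum_add_distrib,
      ← Finset.mul_sum, ← Finset.mul_sum, ← Finset.mul_sum, ← Finset.mul_sum]
    rw [hps, mul_one, ← hPB, ← hPA, ← hS]
    ring
  rw [Finset.sum_congr rfl inner_eq]
  rw [Finset.sum_add_distrib, Finset.sum_add_distrib, Finset.sum_add_distrib,
    ← Finset.mul_sum, ← Finset.mul_sum, ← Finset.mul_sum, ← Finset.mul_sum]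
  rw [← Finset.sum_mul, ← Finset.sum_mul, ← Finset.sum_mul, ← hPA, ← hPB, hps, one_mul]
  have hc : ((cθ:ℝ) : ℂ) = ((2*cc*ss : ℝ) : ℂ) := by rw [h2cs]
  have hp2 : ((cc:ℂ)^2 + (ss:ℂ)^2) = 1 := by
    rw [show ((cc:ℂ)^2 + (ss:ℂ)^2) = ((cc^2 + ss^2 : ℝ) : ℂ) by push_cast; ring, hpyth,
      Complex.ofReal_one]
  rw [hc]
  push_cast
  linear_combination S * hp2

theorem corollary_three_three_theta
    (NA NB : ℕ) (hNA : 2 ≤ NA) (hNB : 2 ≤ NB)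
    (ρ : Matrix (Fin NA × Fin NB) (Fin NA × Fin NB) ℂ)
    (hρ : IsDensityMatrix ρ) (hsep : SeparableState ρ)
    (θ : ℝ) (hθ : θ ∈ Set.Icc 0 Real.pi) :
    traceNorm (realign (ρ + (Real.cos θ : ℂ) • (marginalA ρ ⊗ₖ marginalB ρ))) ≤
      Real.sqrt ((1 + Real.cos θ * ((marginalA ρ * marginalA ρ).trace).re)
        * (1 + Real.cos θ * ((marginalB ρ * marginalB ρ).trace).re)) := by
  classical
  obtain ⟨κ, s, p, A, B, hp, hp1, hdA, hdB, hρeq⟩ := hsep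
  set cθ := Real.cos θ with hcθdef
  set cc := Real.cos (Real.pi/4 - θ/2) with hccdef
  set ss := Real.sin (Real.pi/4 - θ/2) with hssdef
  have hpyth : cc^2 + ss^2 = 1 := by
    rw [hccdef, hssdef, add_comm]; exact Real.sin_sq_add_cos_sq _
  have h2cs : 2*cc*ss = cθ := by
    have h := Real.sin_two_mul (Real.pi/4 - θ/2)
    rw [show 2*(Real.pi/4 - θ/2) = Real.pi/2 - θ by ring, Real.sin_pi_div_two_sub] at h
    rw [hccdef, hssdef, hcθdef]; linarith
  have hρap : ∀ (m n : Fin NA) (μ ν : Fin NB), ρ (m,μ) (n,ν)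
      = ∑ i ∈ s, (p i:ℂ) * (A i m n * B i μ ν) := by
    intro m n μ ν
    rw [hρeq, Matrix.sum_apply]
    refine Finset.sum_congr rfl fun i _ => ?_
    rw [Matrix.smul_apply, Matrix.kroneckerMap_apply, smul_eq_mul]
  have htrB : ∀ i ∈ s, ∑ μ, B i μ μ = 1 := by
    intro i hi
    have : (B i).trace = ∑ μ, B i μ μ := rfl
    rw [← this]; exact (hdB i hi).2
  have htrA : ∀ i ∈ s, ∑ m, A i m m = 1 := by
    intro i hi
    have : (A i).trace = ∑ m, A i m m := rfl
    rw [← this]; exact (hdA i hi).2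
  have hmargA : marginalA ρ = ∑ i ∈ s, (p i : ℂ) • A i := by
    ext m n
    rw [Matrix.sum_apply]
    show (∑ μ, ρ (m,μ) (n,μ)) = _
    rw [Finset.sum_congr rfl fun μ (_ : μ ∈ Finset.univ) => hρap m n μ μ, Finset.sum_comm]
    refine Finset.sum_congr rfl fun i hi => ?_
    rw [Finset.sum_congr rfl (fun μ _ => by ring :
      ∀ μ ∈ Finset.univ, (p i:ℂ) * (A i m n * B i μ μ) = ((p i:ℂ) * A i m n) * B i μ μ)]
    rw [← Finset.mul_sum, htrB i hi, mul_one, Matrix.smul_apply, smul_eq_mul]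
  have hmargB : marginalB ρ = ∑ i ∈ s, (p i : ℂ) • B i := by
    ext μ ν
    rw [Matrix.sum_apply]
    show (∑ m, ρ (m,μ) (m,ν)) = _
    rw [Finset.sum_congr rfl fun m (_ : m ∈ Finset.univ) => hρap m m μ ν, Finset.sum_comm]
    refine Finset.sum_congr rfl fun i hi => ?_
    rw [Finset.sum_congr rfl (fun m _ => by ring :
      ∀ m ∈ Finset.univ, (p i:ℂ) * (A i m m * B i μ ν) = ((p i:ℂ) * B i μ ν) * A i m m)]
    rw [← Finset.mul_sum, htrA i hi, mul_one, Matrix.smul_apply, smul_eq_mul]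
  have hmargAe : ∀ m n, marginalA ρ m n = ∑ i ∈ s, (p i:ℂ) * A i m n := by
    intro m n
    rw [hmargA, Matrix.sum_apply]
    exact Finset.sum_congr rfl fun i _ => by rw [Matrix.smul_apply, smul_eq_mul]
  have hmargBe : ∀ μ ν, marginalB ρ μ ν = ∑ i ∈ s, (p i:ℂ) * B i μ ν := by
    intro μ ν
    rw [hmargB, Matrix.sum_apply]
    exact Finset.sum_congr rfl fun i _ => by rw [Matrix.smul_apply, smul_eq_mul]
  have hdecomp : ∀ (u : Fin NA × Fin NA) (w : Fin NB × Fin NB),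
      realign (ρ + (cθ:ℂ) • (marginalA ρ ⊗ₖ marginalB ρ)) u w
      = ∑ k ∈ s ×ˢ s,
          ((Real.sqrt (p k.1 * p k.2) : ℂ)
            * ((cc:ℂ) * A k.1 u.1 u.2 + (ss:ℂ) * A k.2 u.1 u.2))
          * ((Real.sqrt (p k.1 * p k.2) : ℂ)
            * ((cc:ℂ) * B k.1 w.1 w.2 + (ss:ℂ) * B k.2 w.1 w.2)) := by
    intro u w
    have lhs_eq : realign (ρ + (cθ:ℂ) • (marginalA ρ ⊗ₖ marginalB ρ)) u w
        = ρ (u.1, w.1) (u.2, w.2)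
          + (cθ:ℂ) * (marginalA ρ u.1 u.2 * marginalB ρ w.1 w.2) := by
      show (ρ + (cθ:ℂ) • (marginalA ρ ⊗ₖ marginalB ρ)) (u.1, w.1) (u.2, w.2) = _
      rw [Matrix.add_apply, Matrix.smul_apply, Matrix.kroneckerMap_apply, smul_eq_mul]
    rw [lhs_eq, hρap u.1 u.2 w.1 w.2, hmargAe u.1 u.2, hmargBe w.1 w.2]
    exact (scalar_decomp s p hp hp1 cc ss cθ hpyth h2cs
      (fun i => A i u.1 u.2) (fun i => B i w.1 w.2)).symm
  have main := traceNorm_le_of_eq_sum (s ×ˢ s)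
    (fun k q => (Real.sqrt (p k.1 * p k.2) : ℂ)
      * ((cc:ℂ) * A k.1 q.1 q.2 + (ss:ℂ) * A k.2 q.1 q.2))
    (fun k w => (Real.sqrt (p k.1 * p k.2) : ℂ)
      * ((cc:ℂ) * B k.1 w.1 w.2 + (ss:ℂ) * B k.2 w.1 w.2))
    (realign (ρ + (cθ:ℂ) • (marginalA ρ ⊗ₖ marginalB ρ))) hdecomp
  have claimA := claim_sum s p A hp hp1 hdA cc ss cθ hpyth h2cs
  have claimB := claim_sum s p B hp hp1 hdB cc ss cθ hpyth h2cs
  rw [← hmargA] at claimA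
  rw [← hmargB] at claimB
  have hXnn : ∀ k : κ × κ, (0:ℝ) ≤ ∑ q : Fin NA × Fin NA,
      ‖(Real.sqrt (p k.1 * p k.2) : ℂ)
        * ((cc:ℂ) * A k.1 q.1 q.2 + (ss:ℂ) * A k.2 q.1 q.2)‖ ^ 2 :=
    fun k => Finset.sum_nonneg fun q _ => sq_nonneg _
  have hYnn : ∀ k : κ × κ, (0:ℝ) ≤ ∑ w : Fin NB × Fin NB,
      ‖(Real.sqrt (p k.1 * p k.2) : ℂ)
        * ((cc:ℂ) * B k.1 w.1 w.2 + (ss:ℂ) * B k.2 w.1 w.2)‖ ^ 2 :=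
    fun k => Finset.sum_nonneg fun w _ => sq_nonneg _
  have hA1 : (0:ℝ) ≤ 1 + cθ * ((marginalA ρ * marginalA ρ).trace).re :=
    le_trans (Finset.sum_nonneg fun k _ => hXnn k) claimA
  calc traceNorm (realign (ρ + (cθ:ℂ) • (marginalA ρ ⊗ₖ marginalB ρ)))
      ≤ ∑ k ∈ s ×ˢ s, Real.sqrt (∑ q : Fin NA × Fin NA,
          ‖(Real.sqrt (p k.1 * p k.2) : ℂ)
            * ((cc:ℂ) * A k.1 q.1 q.2 + (ss:ℂ) * A k.2 q.1 q.2)‖ ^ 2)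
        * Real.sqrt (∑ w : Fin NB × Fin NB,
          ‖(Real.sqrt (p k.1 * p k.2) : ℂ)
            * ((cc:ℂ) * B k.1 w.1 w.2 + (ss:ℂ) * B k.2 w.1 w.2)‖ ^ 2) := main
    _ ≤ Real.sqrt (∑ k ∈ s ×ˢ s, ∑ q : Fin NA × Fin NA,
          ‖(Real.sqrt (p k.1 * p k.2) : ℂ)
            * ((cc:ℂ) * A k.1 q.1 q.2 + (ss:ℂ) * A k.2 q.1 q.2)‖ ^ 2)
        * Real.sqrt (∑ k ∈ s ×ˢ s, ∑ w : Fin NB × Fin NB,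
          ‖(Real.sqrt (p k.1 * p k.2) : ℂ)
            * ((cc:ℂ) * B k.1 w.1 w.2 + (ss:ℂ) * B k.2 w.1 w.2)‖ ^ 2) :=
        Real.sum_sqrt_mul_sqrt_le _ hXnn hYnn
    _ ≤ Real.sqrt (1 + cθ * ((marginalA ρ * marginalA ρ).trace).re)
        * Real.sqrt (1 + cθ * ((marginalB ρ * marginalB ρ).trace).re) :=
        mul_le_mul (Real.sqrt_le_sqrt claimA) (Real.sqrt_le_sqrt claimB)
          (Real.sqrt_nonneg _) (Real.sqrt_nonneg _)
    _ = Real.sqrt ((1 + cθ * ((marginalA ρ * marginalA ρ).trace).re)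
        * (1 + cθ * ((marginalB ρ * marginalB ρ).trace).re)) :=
        (Real.sqrt_mul hA1 _).symm
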